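/- (Theorem 5(ii) along flows: forward invariance of the safe sublevel-set condition.) Let f : ℝ^n × ℝ^m → ℝ^n, u : ℝ^n × ℝ^p → ℝ^m and g : ℝ^p → ℝ^p be continuous, let V : ℝ^n × ℝ^p → [0,∞), (x,ζ) ↦ V_ζ(x), be continuous, locally Lipschitz in (x,ζ) and continuously differentiable with respect to x, let d : ℝ^p → ℝ be continuous with d(ζ) > 0 for all ζ ∈ ℝ^p, let ℓ > 0, and let α₃ : [0,∞) → [0,∞) satisfy α₃(s) > 0 for all s > 0 and ⟨∇_x V_ζ(x), f(x, u(x,ζ))⟩ ≤ −α₃(V_ζ(x)) for all (x,ζ) ∈ ℝ^n × ℝ^p. Let (x,ζ) : [0,∞) → ℝ^n × ℝ^p be continuously differentiable with x'(t) = f(x(t), u(x(t),ζ(t))) and ζ'(t) = max{0, ℓ·(d(ζ(t)) − V_{ζ(t)}(x(t)))}·g(ζ(t)) for all t ≥ 0. If d(ζ(0)) − V_{ζ(0)}(x(0)) ≥ 0, then d(ζ(t)) − V_{ζ(t)}(x(t)) ≥ 0 for all t ≥ 0. -/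

import Mathlib

open scoped RealInnerProductSpace

theorem stmt19 (n m p : ℕ) (hn : 1 ≤ n) (hm : 1 ≤ m) (hp : 1 ≤ p)
    (f : EuclideanSpace ℝ (Fin n) → EuclideanSpace ℝ (Fin m) → EuclideanSpace ℝ (Fin n))
    (u : EuclideanSpace ℝ (Fin n) → EuclideanSpace ℝ (Fin p) → EuclideanSpace ℝ (Fin m))
    (g : EuclideanSpace ℝ (Fin p) → EuclideanSpace ℝ (Fin p))
    (hf : Continuous (fun pr : EuclideanSpace ℝ (Fin n) × EuclideanSpace ℝ (Fin m) => f pr.1 pr.2))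
    (hu : Continuous (fun pr : EuclideanSpace ℝ (Fin n) × EuclideanSpace ℝ (Fin p) => u pr.1 pr.2))
    (hg : Continuous g)
    (V : EuclideanSpace ℝ (Fin n) → EuclideanSpace ℝ (Fin p) → ℝ)
    (hVnonneg : ∀ x ζ, 0 ≤ V x ζ)
    (hVlip : LocallyLipschitz (fun pr : EuclideanSpace ℝ (Fin n) × EuclideanSpace ℝ (Fin p) => V pr.1 pr.2))
    (hVx : ∀ ζ, ContDiff ℝ 1 (fun x => V x ζ))
    (d : EuclideanSpace ℝ (Fin p) → ℝ) (hd : Continuous d) (hdpos : ∀ ζ, 0 < d ζ)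
    (ℓ : ℝ) (hℓ : 0 < ℓ)
    (α₃ : ℝ → ℝ) (hα₃nonneg : ∀ s, 0 ≤ s → 0 ≤ α₃ s) (hα₃pos : ∀ s, 0 < s → 0 < α₃ s)
    (hdecr : ∀ x ζ, ⟪gradient (fun y => V y ζ) x, f x (u x ζ)⟫ ≤ -α₃ (V x ζ))
    (x : ℝ → EuclideanSpace ℝ (Fin n)) (ζ : ℝ → EuclideanSpace ℝ (Fin p))
    (hodex : ∀ t ∈ Set.Ici (0:ℝ), HasDerivAt x (f (x t) (u (x t) (ζ t))) t)
    (hodeζ : ∀ t ∈ Set.Ici (0:ℝ),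
      HasDerivAt ζ ((max 0 (ℓ * (d (ζ t) - V (x t) (ζ t)))) • g (ζ t)) t)
    (h0 : 0 ≤ d (ζ 0) - V (x 0) (ζ 0)) :
    ∀ t ∈ Set.Ici (0:ℝ), 0 ≤ d (ζ t) - V (x t) (ζ t) := by
  intro t₁ ht₁
  by_contra hneg
  push_neg at hneg
  have hVcont : Continuous (fun pr : EuclideanSpace ℝ (Fin n) × EuclideanSpace ℝ (Fin p) => V pr.1 pr.2) :=
    hVlip.continuous
  have hxc : ∀ t ∈ Set.Ici (0:ℝ), ContinuousAt x t := fun t ht => (hodex t ht).continuousAt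
  have hζc : ∀ t ∈ Set.Ici (0:ℝ), ContinuousAt ζ t := fun t ht => (hodeζ t ht).continuousAt
  have hhc : ∀ t ∈ Set.Ici (0:ℝ), ContinuousAt (fun t => d (ζ t) - V (x t) (ζ t)) t := by
    intro t ht
    exact ((hd.continuousAt).comp (hζc t ht)).sub
      ((hVcont.continuousAt).comp (f := fun t => (x t, ζ t)) ((hxc t ht).prodMk (hζc t ht)))
  -- the set of times in [0, t₁] where the quantity is nonnegative
  obtain ⟨S, hSdef⟩ : ∃ S, S = Set.Icc (0:ℝ) t₁ ∩ (fun t => d (ζ t) - V (x t) (ζ t)) ⁻¹' Set.Ici 0 :=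
    ⟨_, rfl⟩
  have hmemS : ∀ t, t ∈ S ↔ (0 ≤ t ∧ t ≤ t₁) ∧ 0 ≤ d (ζ t) - V (x t) (ζ t) := by
    intro t
    simp [hSdef, Set.mem_Icc]
  have hS0 : (0:ℝ) ∈ S := (hmemS 0).2 ⟨⟨le_refl 0, ht₁⟩, h0⟩
  have hSbdd : BddAbove S := ⟨t₁, fun t htS => ((hmemS t).1 htS).1.2⟩
  have hSclosed : IsClosed S := by
    have hco : ContinuousOn (fun t => d (ζ t) - V (x t) (ζ t)) (Set.Icc (0:ℝ) t₁) :=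
      fun t ht => (hhc t ht.1).continuousWithinAt
    rw [hSdef]
    exact hco.preimage_isClosed_of_isClosed isClosed_Icc isClosed_Ici
  obtain ⟨t₀, ht₀eq⟩ : ∃ t₀ : ℝ, t₀ = sSup S := ⟨_, rfl⟩
  have ht₀S : t₀ ∈ S := ht₀eq ▸ hSclosed.csSup_mem ⟨0, hS0⟩ hSbdd
  obtain ⟨⟨ht₀0, ht₀t₁⟩, hht₀⟩ := (hmemS t₀).1 ht₀S
  have ht₀lt : t₀ < t₁ :=
    ht₀t₁.lt_of_ne (fun he => absurd (he ▸ hht₀) (not_le.2 hneg))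
  have hIci : Set.Icc t₀ t₁ ⊆ Set.Ici (0:ℝ) := fun t ht => le_trans ht₀0 ht.1
  -- negative on (t₀, t₁]
  have hhlt : ∀ t, t₀ < t → t ≤ t₁ → d (ζ t) - V (x t) (ζ t) < 0 := by
    intro t ht ht'
    by_contra hc
    push_neg at hc
    have : t ∈ S := (hmemS t).2 ⟨⟨le_trans ht₀0 ht.le, ht'⟩, hc⟩
    exact absurd (ht₀eq ▸ le_csSup hSbdd this) (not_le.2 ht)
  -- zero at t₀
  have hht₀0 : d (ζ t₀) - V (x t₀) (ζ t₀) = 0 := by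
    rcases eq_or_lt_of_le hht₀ with heq | hlt
    · exact heq.symm
    · exfalso
      have hca := hhc t₀ (Set.mem_Ici.2 ht₀0)
      have hev : ∀ᶠ s in nhds t₀, 0 < d (ζ s) - V (x s) (ζ s) :=
        (continuousAt_const (y := (0:ℝ))).eventually_lt hca hlt
      rcases Metric.eventually_nhds_iff.1 hev with ⟨δ, hδ, hmem⟩
      have hs1 : t₀ < min (t₀ + δ/2) t₁ := lt_min (by linarith) ht₀lt
      have hs2 : min (t₀ + δ/2) t₁ ≤ t₁ := min_le_right _ _
      have hs3 : dist (min (t₀ + δ/2) t₁) t₀ < δ := by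
        rw [Real.dist_eq, abs_of_pos (by linarith)]
        have : min (t₀ + δ/2) t₁ ≤ t₀ + δ/2 := min_le_left _ _
        linarith
      exact absurd (hmem hs3) (not_lt.2 (hhlt _ hs1 hs2).le)
  -- ζ is constant on [t₀, t₁]
  have hζconst : ∀ t ∈ Set.Icc t₀ t₁, ζ t = ζ t₀ := by
    have hcont : ContinuousOn ζ (Set.Icc t₀ t₁) :=
      fun t ht => (hζc t (hIci ht)).continuousWithinAt
    have hderiv : ∀ t ∈ Set.Ico t₀ t₁, HasDerivWithinAt ζ 0 (Set.Ici t) t := by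
      intro t ht
      have hde := (hodeζ t (hIci ⟨ht.1, ht.2.le⟩)).hasDerivWithinAt (s := Set.Ici t)
      have hz : (max 0 (ℓ * (d (ζ t) - V (x t) (ζ t)))) = 0 := by
        rcases eq_or_lt_of_le ht.1 with heq | hlt
        · rw [← heq, hht₀0, mul_zero, max_self]
        · have : d (ζ t) - V (x t) (ζ t) < 0 := hhlt t hlt ht.2.le
          exact max_eq_left (by nlinarith)
      rw [hz, zero_smul] at hde
      exact hde
    exact fun t ht => constant_of_has_deriv_right_zero hcont hderiv t ht
  -- V (x ·) (ζ t₀) is antitone on [t₀, t₁]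
  have hφderiv : ∀ t ∈ Set.Icc t₀ t₁,
      HasDerivAt (fun s => V (x s) (ζ t₀))
        ⟪gradient (fun y => V y (ζ t₀)) (x t), f (x t) (u (x t) (ζ t))⟫ t := by
    intro t ht
    have hdiff : DifferentiableAt ℝ (fun y => V y (ζ t₀)) (x t) :=
      ((hVx (ζ t₀)).differentiable one_ne_zero).differentiableAt
    have hgrad := hdiff.hasGradientAt
    have := hgrad.hasFDerivAt.comp_hasDerivAt t (hodex t (hIci ht))
    simpa [Function.comp_def, InnerProductSpace.toDual_apply_apply] using this
  have hanti : AntitoneOn (fun s => V (x s) (ζ t₀)) (Set.Icc t₀ t₁) := by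
    apply antitoneOn_of_deriv_nonpos (convex_Icc t₀ t₁)
    · exact fun t ht => (hφderiv t ht).continuousAt.continuousWithinAt
    · intro t ht
      rw [interior_Icc] at ht
      exact (hφderiv t ⟨ht.1.le, ht.2.le⟩).differentiableAt.differentiableWithinAt
    · intro t ht
      rw [interior_Icc] at ht
      have ht' : t ∈ Set.Icc t₀ t₁ := ⟨ht.1.le, ht.2.le⟩
      rw [(hφderiv t ht').deriv, hζconst t ht']
      have h1 := hdecr (x t) (ζ t₀)
      have h2 : 0 ≤ α₃ (V (x t) (ζ t₀)) := hα₃nonneg _ (hVnonneg _ _)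
      linarith
  have hmem₀ : t₀ ∈ Set.Icc t₀ t₁ := ⟨le_refl _, ht₀t₁⟩
  have hmem₁ : t₁ ∈ Set.Icc t₀ t₁ := ⟨ht₀t₁, le_refl _⟩
  have h3 : V (x t₁) (ζ t₀) ≤ V (x t₀) (ζ t₀) := hanti hmem₀ hmem₁ ht₀t₁
  have hζt₁ : ζ t₁ = ζ t₀ := hζconst t₁ hmem₁
  rw [hζt₁] at hneg
  linarith
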